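/- arXiv:2405.19500 — 2 statements merged into one kernel-verified Lean document; each statement's English description precedes it below -/
import Mathlib

section
/- Let R > 0 and let E ⊆ S_R = {x ∈ ℝ³ : ‖x‖ = R} be a finite union of circles, i.e., E = ⋃_{k=1}^{n} l_k where each l_k is the (nonempty, non-degenerate) intersection of S_R with an affine plane in ℝ³. Suppose u₁ and u₂ are both harmonic on D = {x : ‖x‖ > R}, continuous on ({x : ‖x‖ ≥ R}) \ E, bounded on {x : ‖x‖ ≥ R}, agree at every point of S_R \ E, and both satisfy uᵢ(x) → 0 as ‖x‖ → ∞. Then u₁(x) = u₂(x) for all x with ‖x‖ > R, i.e., the external Dirichlet generalized harmonic problem has at most one solution. -/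
open scoped RealInnerProductSpace

/-- Euclidean 3-space. -/
abbrev E3 : Type := EuclideanSpace ℝ (Fin 3)

/-- The Laplacian `Δu = ∑ i, ∂²u/∂xᵢ²` of `u : ℝ³ → ℝ`. -/
noncomputable def lap (u : E3 → ℝ) (x : E3) : ℝ :=
  ∑ i : Fin 3,
    fderiv ℝ (fun y => fderiv ℝ u y (EuclideanSpace.single i 1)) x (EuclideanSpace.single i 1)

/-- `u` is harmonic on `U` iff it is twice continuously differentiable on `U`
and its Laplacian vanishes identically on `U`. -/
def IsHarmonicOn (u : E3 → ℝ) (U : Set E3) : Prop :=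
  ContDiffOn ℝ 2 u U ∧ ∀ x ∈ U, lap u x = 0

open Filter Set Complex

noncomputable abbrev ee (i : Fin 3) : E3 := EuclideanSpace.single i (1:ℝ)

/-- Compute `lap` from explicit first and second derivative witnesses. -/
theorem lap_eq_of {u : E3 → ℝ} {x : E3} (D : E3 → E3 →L[ℝ] ℝ) (ℓ : Fin 3 → E3 →L[ℝ] ℝ)
    (hD : ∀ᶠ y in nhds x, HasFDerivAt u (D y) y)
    (hℓ : ∀ i, HasFDerivAt (fun y => D y (ee i)) (ℓ i) x) :
    lap u x = ∑ i : Fin 3, ℓ i (ee i) := by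
  unfold lap
  refine Finset.sum_congr rfl fun i _ => ?_
  have h1 : (fun y => fderiv ℝ u y (ee i)) =ᶠ[nhds x] (fun y => D y (ee i)) := by
    filter_upwards [hD] with y hy
    rw [hy.fderiv]
  rw [h1.fderiv_eq, (hℓ i).fderiv]

theorem aux_diff {u : E3 → ℝ} {x : E3} (hu : ContDiffAt ℝ 2 u x) :
    (∀ᶠ y in nhds x, DifferentiableAt ℝ u y) ∧
      ∀ v : E3, DifferentiableAt ℝ (fun y => fderiv ℝ u y v) x := by
  constructor
  · filter_upwards [hu.eventually (by norm_num)] with y hy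
    exact hy.differentiableAt (by norm_num)
  · intro v
    have h1 : ContDiffAt ℝ 1 (fderiv ℝ u) x := hu.fderiv_right (le_refl _)
    have h2 := ((ContinuousLinearMap.apply ℝ ℝ v).contDiff (n := 1)).contDiffAt.comp x h1
    exact h2.differentiableAt (by norm_num)

theorem lap_add {u v : E3 → ℝ} {x : E3} (hu : ContDiffAt ℝ 2 u x) (hv : ContDiffAt ℝ 2 v x) :
    lap (fun y => u y + v y) x = lap u x + lap v x := by
  obtain ⟨hu1, hu2⟩ := aux_diff hu
  obtain ⟨hv1, hv2⟩ := aux_diff hv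
  have h := lap_eq_of (u := fun y => u y + v y)
    (fun y => fderiv ℝ u y + fderiv ℝ v y)
    (fun i => fderiv ℝ (fun y => fderiv ℝ u y (ee i)) x +
      fderiv ℝ (fun y => fderiv ℝ v y (ee i)) x)
    (by filter_upwards [hu1, hv1] with y h1 h2 using h1.hasFDerivAt.add h2.hasFDerivAt)
    (fun i => by
      simpa using ((hu2 (ee i)).hasFDerivAt.fun_add (hv2 (ee i)).hasFDerivAt))
  rw [h]
  simp [lap, Finset.sum_add_distrib]

theorem lap_neg (u : E3 → ℝ) (x : E3) : lap (fun y => -u y) x = - lap u x := by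
  have h1 : ∀ i, (fun y => fderiv ℝ (fun z => -u z) y (ee i)) =
      (fun y => -(fderiv ℝ u y (ee i))) := by
    intro i; funext y
    rw [fderiv_fun_neg]; simp
  unfold lap
  rw [← Finset.sum_neg_distrib]
  refine Finset.sum_congr rfl fun i _ => ?_
  rw [h1 i]
  have : (fun y => -(fderiv ℝ u y (ee i))) = (fun y => -((fun z => fderiv ℝ u z (ee i)) y)) := rfl
  rw [this, fderiv_fun_neg]; simp

theorem lap_const_mul {u : E3 → ℝ} {x : E3} (c : ℝ) (hu : ContDiffAt ℝ 2 u x) :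
    lap (fun y => c * u y) x = c * lap u x := by
  obtain ⟨hu1, hu2⟩ := aux_diff hu
  have h := lap_eq_of (u := fun y => c * u y)
    (fun y => c • fderiv ℝ u y)
    (fun i => c • fderiv ℝ (fun y => fderiv ℝ u y (ee i)) x)
    (by filter_upwards [hu1] with y h1 using h1.hasFDerivAt.const_smul c)
    (fun i => by
      simpa using ((hu2 (ee i)).hasFDerivAt.fun_const_smul c))
  rw [h]
  simp [lap, Finset.mul_sum]

theorem lap_sub {u v : E3 → ℝ} {x : E3} (hu : ContDiffAt ℝ 2 u x) (hv : ContDiffAt ℝ 2 v x) :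
    lap (fun y => u y - v y) x = lap u x - lap v x := by
  have h := lap_add hu hv.neg
  simp only [sub_eq_add_neg]
  calc lap (fun y => u y + -v y) x = lap u x + lap (fun y => -v y) x := h
    _ = lap u x + -lap v x := by rw [lap_neg]

theorem lap_congr {u v : E3 → ℝ} {x : E3} (h : u =ᶠ[nhds x] v) : lap u x = lap v x := by
  unfold lap
  refine Finset.sum_congr rfl fun i _ => ?_
  have h0 : ∀ᶠ y in nhds x, u =ᶠ[nhds y] v := h.eventuallyEq_nhds
  have h1 : (fun y => fderiv ℝ u y (EuclideanSpace.single i 1)) =ᶠ[nhds x]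
      (fun y => fderiv ℝ v y (EuclideanSpace.single i 1)) := by
    filter_upwards [h0] with y hy
    rw [hy.fderiv_eq]
  rw [h1.fderiv_eq]

theorem lap_const (c : ℝ) (x : E3) : lap (fun _ => c) x = 0 := by
  unfold lap
  have h1 : ∀ i : Fin 3, (fun y : E3 => fderiv ℝ (fun _ : E3 => c) y (EuclideanSpace.single i 1))
      = fun _ : E3 => (0:ℝ) := by
    intro i; funext y; rw [fderiv_fun_const]; simp
  refine Finset.sum_eq_zero fun i _ => ?_
  rw [h1 i, fderiv_fun_const]; simp

theorem lap_sum {n : ℕ} (f : Fin n → E3 → ℝ) {x : E3}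
    (hf : ∀ k, ContDiffAt ℝ 2 (f k) x) :
    lap (fun y => ∑ k, f k y) x = ∑ k, lap (f k) x := by
  induction n with
  | zero => simpa using lap_const 0 x
  | succ m ih =>
      have e1 : (fun y => ∑ k : Fin (m+1), f k y) =
          (fun y => (∑ k : Fin m, f k.castSucc y) + f (Fin.last m) y) := by
        funext y; rw [Fin.sum_univ_castSucc]
      have c1 : ContDiffAt ℝ 2 (fun y => ∑ k : Fin m, f k.castSucc y) x :=
        ContDiffAt.sum fun k _ => hf _
      rw [e1, lap_add c1 (hf _), ih (fun k => f k.castSucc) (fun k => hf _),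
        Fin.sum_univ_castSucc]

noncomputable def sqnorm (y : E3) : ℝ := ∑ i, y i * y i

theorem sqnorm_eq (y : E3) : sqnorm y = ‖y‖^2 := by
  rw [EuclideanSpace.norm_eq, Real.sq_sqrt (by positivity)]
  simp [sqnorm, sq]

theorem contDiff_sqnorm : ContDiff ℝ 2 sqnorm := by
  unfold sqnorm
  exact ContDiff.sum fun i _ =>
    ((EuclideanSpace.proj (𝕜 := ℝ) i).contDiff).mul ((EuclideanSpace.proj (𝕜 := ℝ) i).contDiff)

theorem hasFDerivAt_sqnorm (y : E3) :
    HasFDerivAt sqnorm (∑ i : Fin 3, (2 * y i) • (EuclideanSpace.proj (𝕜 := ℝ) i)) y := by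
  have h : ∀ i : Fin 3, HasFDerivAt (fun z : E3 => z i * z i)
      ((2 * y i) • (EuclideanSpace.proj (𝕜 := ℝ) i)) y := by
    intro i
    have := ((EuclideanSpace.proj (𝕜 := ℝ) i).hasFDerivAt (x := y)).fun_mul
      ((EuclideanSpace.proj (𝕜 := ℝ) i).hasFDerivAt (x := y))
    refine this.congr_fderiv ?_
    ext v
    simp [two_mul]
    ring
  exact HasFDerivAt.fun_sum (fun i _ => h i)

theorem lap_sqnorm (x : E3) : lap sqnorm x = 6 := by
  have h := lap_eq_of (u := sqnorm)
    (fun y => ∑ i : Fin 3, (2 * y i) • (EuclideanSpace.proj (𝕜 := ℝ) i))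
    (fun i => (2:ℝ) • (EuclideanSpace.proj (𝕜 := ℝ) i))
    (Eventually.of_forall hasFDerivAt_sqnorm)
    (fun i => by
      have e1 : (fun y : E3 => (∑ j : Fin 3, (2 * y j) • (EuclideanSpace.proj (𝕜 := ℝ) j)) (ee i))
          = fun y : E3 => 2 * y i := by
        funext y
        simp only [ContinuousLinearMap.coe_sum', Finset.sum_apply,
          ContinuousLinearMap.coe_smul', Pi.smul_apply, PiLp.proj_apply]
        rw [Finset.sum_eq_single i]
        · simp [EuclideanSpace.single_apply]
        · intro j _ hj; simp [EuclideanSpace.single_apply, hj]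
        · simp
      rw [e1]
      have := ((EuclideanSpace.proj (𝕜 := ℝ) i).hasFDerivAt (x := x)).fun_const_smul (2:ℝ)
      simpa [smul_eq_mul] using this)
  rw [h]
  have : ∀ i : Fin 3, ((2:ℝ) • (EuclideanSpace.proj (𝕜 := ℝ) i)) (ee i) = 2 := by
    intro i; simp [EuclideanSpace.single_apply]
  simp only [this]
  norm_num

/-- One-dimensional second derivative test at a local maximum. -/
theorem second_deriv_nonpos_of_isLocalMax {g g' : ℝ → ℝ} {c : ℝ}
    (hmax : IsLocalMax g 0)
    (hg' : ∀ᶠ t in nhds 0, HasDerivAt g (g' t) t)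
    (hg'' : HasDerivAt g' c 0) : c ≤ 0 := by
  by_contra hc
  push_neg at hc
  -- g' 0 = 0
  have h0 : g' 0 = 0 := by
    have := hmax.deriv_eq_zero
    rwa [hg'.self_of_nhds.deriv] at this
  -- slope of g' tends to c > 0, so g' > 0 on a right interval
  have hslope : Tendsto (fun t => g' t / t) (nhdsWithin 0 (Set.Ioi 0)) (nhds c) := by
    have h1 := hg''.hasDerivWithinAt (s := Set.Ioi 0)
    have h2 := (hasDerivWithinAt_iff_tendsto_slope).mp h1
    have h3 : (Set.Ioi (0:ℝ)) \ {0} = Set.Ioi 0 :=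
      Set.diff_singleton_eq_self (by simp)
    rw [h3] at h2
    refine h2.congr' ?_
    filter_upwards [self_mem_nhdsWithin] with t ht
    simp [slope, h0]
    rw [div_eq_inv_mul]
  have hpos : ∀ᶠ t in nhdsWithin 0 (Set.Ioi 0), 0 < g' t := by
    have := hslope.eventually (eventually_gt_nhds (show c/2 < c by linarith))
    filter_upwards [this, self_mem_nhdsWithin] with t ht ht'
    have htpos : (0:ℝ) < t := ht'
    have h1 : c/2 * t < g' t := (lt_div_iff₀ htpos).mp ht
    nlinarith
  obtain ⟨u, hu, hsub⟩ := mem_nhdsGT_iff_exists_Ioo_subset.mp hpos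
  obtain ⟨r, hr, hrd⟩ := Metric.eventually_nhds_iff.mp hg'
  obtain ⟨r2, hr2, hrm⟩ := Metric.eventually_nhds_iff.mp hmax
  set T : ℝ := min (min r r2) u / 2 with hT
  have hT0 : 0 < T := by
    have : (0:ℝ) < u := hu
    positivity
  have hTr : T < r := by
    have h1 : T ≤ min r r2 / 2 := by
      apply div_le_div_of_nonneg_right ?_ (by norm_num)
      exact min_le_left _ _
    have := min_le_left r r2
    linarith
  have hTr2 : T < r2 := by
    have h1 : T ≤ min r r2 / 2 := by
      apply div_le_div_of_nonneg_right ?_ (by norm_num)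
      exact min_le_left _ _
    have := min_le_right r r2
    linarith
  have hTu : T < u := by
    have h1 : T ≤ u / 2 := by
      apply div_le_div_of_nonneg_right ?_ (by norm_num)
      exact min_le_right _ _
    have : (0:ℝ) < u := hu
    linarith
  have hmono : StrictMonoOn g (Set.Icc 0 T) := by
    apply strictMonoOn_of_deriv_pos (convex_Icc 0 T)
    · intro t ht
      have : dist t (0:ℝ) < r := by
        rw [Real.dist_eq, sub_zero, _root_.abs_of_nonneg ht.1]
        linarith [ht.2]
      exact ((hrd this).differentiableAt.continuousAt).continuousWithinAt
    · intro t ht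
      rw [interior_Icc] at ht
      have hd : dist t (0:ℝ) < r := by
        rw [Real.dist_eq, sub_zero, _root_.abs_of_nonneg (le_of_lt ht.1)]
        linarith [ht.2]
      rw [(hrd hd).deriv]
      exact hsub ⟨ht.1, by linarith [ht.2]⟩
  have h6 : g 0 < g T :=
    hmono (Set.left_mem_Icc.mpr (le_of_lt hT0)) (Set.right_mem_Icc.mpr (le_of_lt hT0)) hT0
  have h7 : g T ≤ g 0 := by
    apply hrm
    rw [Real.dist_eq, sub_zero, _root_.abs_of_nonneg (le_of_lt hT0)]
    exact hTr2
  linarith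

/-- No interior local max where the Laplacian is positive. -/
theorem not_isLocalMax_of_lap_pos {g : E3 → ℝ} {x : E3}
    (hC : ContDiffAt ℝ 2 g x) (hlap : 0 < lap g x) : ¬ IsLocalMax g x := by
  intro hmax
  -- each diagonal second derivative is ≤ 0
  have key : ∀ i : Fin 3,
      fderiv ℝ (fun y => fderiv ℝ g y (ee i)) x (ee i) ≤ 0 := by
    intro i
    set A : ℝ → E3 := fun t => x + t • (ee i) with hA
    have hAc : Continuous A := by continuity
    have hA0 : A 0 = x := by simp [hA]
    have hAd : ∀ t : ℝ, HasDerivAt A (ee i) t := by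
      intro t
      simpa [hA] using ((hasDerivAt_id t).smul_const (ee i)).const_add x
    -- local max of g ∘ A at 0
    have hT : Tendsto A (nhds 0) (nhds x) := by
      rw [← hA0]; exact hAc.continuousAt
    have hmax' : IsLocalMax (g ∘ A) 0 := by
      filter_upwards [hT.eventually hmax] with t ht
      simpa [Function.comp, hA0] using ht
    -- first derivatives near 0
    have hg1 : ∀ᶠ t in nhds 0, HasDerivAt (g ∘ A)
        ((fun y => fderiv ℝ g y (ee i)) (A t)) t := by
      have hev : ∀ᶠ y in nhds x, DifferentiableAt ℝ g y := by
        filter_upwards [hC.eventually (by norm_num)] with y hy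
        exact hy.differentiableAt (by norm_num)
      filter_upwards [hT.eventually hev] with t ht
      exact (ht.hasFDerivAt.comp_hasDerivAt t (hAd t))
    -- second derivative at 0
    have hg2 : HasDerivAt (fun t => (fun y => fderiv ℝ g y (ee i)) (A t))
        (fderiv ℝ (fun y => fderiv ℝ g y (ee i)) x (ee i)) 0 := by
      have hdiff : DifferentiableAt ℝ (fun y => fderiv ℝ g y (ee i)) x := by
        have h1 : ContDiffAt ℝ 1 (fderiv ℝ g) x := hC.fderiv_right (le_refl _)
        exact (((ContinuousLinearMap.apply ℝ ℝ (ee i)).contDiff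
          (n := 1)).contDiffAt.comp x h1).differentiableAt (by norm_num)
      have h5 : HasFDerivAt (fun y => fderiv ℝ g y (ee i))
          (fderiv ℝ (fun y => fderiv ℝ g y (ee i)) x) (A 0) := hA0.symm ▸ hdiff.hasFDerivAt
      exact h5.comp_hasDerivAt 0 (hAd 0)
    exact second_deriv_nonpos_of_isLocalMax hmax' hg1 hg2
  have : lap g x ≤ 0 := by
    unfold lap
    exact Finset.sum_nonpos fun i _ => key i
  linarith

/-- Maximum principle on a bounded open set. -/
theorem max_principle {Ω : Set E3} (hΩo : IsOpen Ω) (hΩb : Bornology.IsBounded Ω)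
    {g : E3 → ℝ} (hg : ContinuousOn g (closure Ω))
    (hg2 : ∀ x ∈ Ω, ContDiffAt ℝ 2 g x) (hlap : ∀ x ∈ Ω, lap g x = 0)
    {C : ℝ} (hC : ∀ x ∈ frontier Ω, g x ≤ C) :
    ∀ x ∈ closure Ω, g x ≤ C := by
  intro x hx
  have hcomp : IsCompact (closure Ω) :=
    Metric.isCompact_of_isClosed_isBounded isClosed_closure hΩb.closure
  have hsqnn : ∀ y : E3, 0 ≤ sqnorm y := fun y => Finset.sum_nonneg fun i _ => mul_self_nonneg _
  -- a bound for sqnorm on the closure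
  obtain ⟨m, hm, hmK'⟩ := hcomp.exists_isMaxOn ⟨x, hx⟩
    (contDiff_sqnorm.continuous.continuousOn)
  have hmK : ∀ y ∈ closure Ω, sqnorm y ≤ sqnorm m := fun y hy => hmK' hy
  set K : ℝ := sqnorm m with hK
  have hK0 : 0 ≤ K := le_trans (hsqnn x) (hmK x hx)
  -- main estimate for each η > 0
  have main : ∀ η : ℝ, 0 < η → g x ≤ C + η * K := by
    intro η hη
    set h : E3 → ℝ := fun y => g y + η * sqnorm y with hh
    have hcont : ContinuousOn h (closure Ω) :=
      hg.add ((contDiff_sqnorm.continuous.const_smul η).continuousOn)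
    obtain ⟨z, hz, hzmax'⟩ := hcomp.exists_isMaxOn ⟨x, hx⟩ hcont
    have hzmax : ∀ y ∈ closure Ω, h y ≤ h z := fun y hy => hzmax' hy
    by_cases hzΩ : z ∈ Ω
    · exfalso
      have hC2 : ContDiffAt ℝ 2 h z :=
        (hg2 z hzΩ).add (contDiffAt_const.mul contDiff_sqnorm.contDiffAt)
      have hlaph : lap h z = 6 * η := by
        rw [hh]
        rw [lap_add (hg2 z hzΩ) (contDiffAt_const.mul contDiff_sqnorm.contDiffAt),
          lap_const_mul η contDiff_sqnorm.contDiffAt, hlap z hzΩ, lap_sqnorm]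
        ring
      apply not_isLocalMax_of_lap_pos hC2 (by rw [hlaph]; positivity)
      filter_upwards [hΩo.mem_nhds hzΩ] with y hy
      exact hzmax y (subset_closure hy)
    · have hzf : z ∈ frontier Ω := by
        rw [hΩo.frontier_eq]
        exact ⟨hz, hzΩ⟩
      have h1 : h x ≤ h z := hzmax x hx
      have h2 : g z ≤ C := hC z hzf
      have h3 : sqnorm z ≤ K := hmK z hz
      have h4 : 0 ≤ sqnorm x := hsqnn x
      simp only [hh] at h1
      nlinarith
  refine le_of_forall_pos_le_add fun ε hε => ?_
  have := main (ε / (K + 1)) (by positivity)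
  have h5 : ε / (K + 1) * K ≤ ε := by
    rw [div_mul_eq_mul_div, div_le_iff₀ (by linarith)]
    nlinarith
  linarith

theorem half_re : ((1:ℂ)/2).re = 1/2 := by norm_num
theorem half_im : ((1:ℂ)/2).im = 0 := by norm_num

theorem re_cpow_half_nonneg (z : ℂ) : 0 ≤ (z ^ ((1:ℂ)/2)).re := by
  by_cases hz : z = 0
  · rw [hz, Complex.zero_cpow (by norm_num)]; simp
  · rw [Complex.cpow_def_of_ne_zero hz, Complex.exp_re]
    have him : (Complex.log z * ((1:ℂ)/2)).im = Complex.arg z / 2 := by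
      rw [Complex.mul_im, half_re, half_im, Complex.log_im]
      ring
    rw [him]
    have h1 := Complex.neg_pi_lt_arg z
    have h2 := Complex.arg_le_pi z
    have hpi := Real.pi_pos
    have hcos : 0 ≤ Real.cos (Complex.arg z / 2) := by
      apply Real.cos_nonneg_of_mem_Icc
      constructor <;> [linarith; linarith]
    positivity

theorem sq_re_cpow_half {z : ℂ} (hz : z ≠ 0) :
    (z ^ ((1:ℂ)/2)).re ^ 2 = (‖z‖ + z.re) / 2 := by
  set s := z ^ ((1:ℂ)/2) with hs
  have hmul : s * s = z := by
    rw [hs, ← Complex.cpow_add _ _ hz]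
    norm_num
  have habs : ‖s‖ = ‖z‖ ^ ((1:ℝ)/2) := by
    rw [hs, Complex.norm_cpow_of_ne_zero hz, half_re, half_im]
    simp
  have hnsq : Complex.normSq s = ‖z‖ := by
    have h0 := congrArg (fun t : ℝ => t ^ 2) habs
    rw [Complex.sq_norm] at h0
    rw [h0, ← Real.rpow_natCast (‖z‖ ^ ((1:ℝ)/2)) 2, ← Real.rpow_mul
      (norm_nonneg z)]
    norm_num
  have hre : (s * s).re = z.re := by rw [hmul]
  rw [Complex.mul_re] at hre
  have hn : s.re^2 + s.im^2 = ‖z‖ := by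
    rw [← hnsq, Complex.normSq_apply]; ring
  nlinarith [hre, hn]

theorem re_cpow_neg_half_eq {z : ℂ} (hz : z ≠ 0) :
    (z ^ (-((1:ℂ)/2))).re = (z ^ ((1:ℂ)/2)).re / ‖z‖ := by
  rw [Complex.cpow_neg, Complex.inv_re]
  congr 1
  have habs : ‖z ^ ((1:ℂ)/2)‖ = ‖z‖ ^ ((1:ℝ)/2) := by
    rw [Complex.norm_cpow_of_ne_zero hz, half_re, half_im]
    simp
  rw [← Complex.sq_norm, habs, ← Real.rpow_natCast (‖z‖ ^ ((1:ℝ)/2)) 2,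
    ← Real.rpow_mul (norm_nonneg z)]
  norm_num

theorem re_cpow_neg_half_nonneg (z : ℂ) : 0 ≤ (z ^ (-((1:ℂ)/2))).re := by
  by_cases hz : z = 0
  · rw [hz, Complex.zero_cpow (by norm_num)]; simp
  · rw [re_cpow_neg_half_eq hz]
    exact div_nonneg (re_cpow_half_nonneg z) (norm_nonneg z)

theorem re_cpow_neg_half_lower {k : ℝ} (hk : 0 ≤ k) {z : ℂ} (hz : z ≠ 0)
    (hhalf : -(k * |z.im|) ≤ z.re) :
    Real.sqrt ((1 - k / Real.sqrt (1 + k^2)) / 2) / Real.sqrt (‖z‖)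
      ≤ (z ^ (-((1:ℂ)/2))).re := by
  have habs : 0 < ‖z‖ := norm_pos_iff.mpr hz
  obtain ⟨τ, hτ⟩ : ∃ t : ℝ, t = 1 - k / Real.sqrt (1 + k^2) := ⟨_, rfl⟩
  rw [show ((1 - k / Real.sqrt (1 + k^2)) / 2) = τ/2 by rw [hτ]]
  have hsq : 0 < Real.sqrt (1 + k^2) := Real.sqrt_pos.mpr (by positivity)
  have h6' := Real.sq_sqrt (show (0:ℝ) ≤ 1 + k^2 by positivity)
  have hτ1 : τ ≤ 1 := by
    have : 0 ≤ k / Real.sqrt (1 + k^2) := by positivity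
    rw [hτ]; linarith
  have hτ0 : 0 < τ := by
    have h1 : k < Real.sqrt (1+k^2) := by nlinarith [hsq, h6']
    have h2' : k / Real.sqrt (1+k^2) < 1 := (div_lt_one hsq).mpr h1
    rw [hτ]; linarith
  have habs2 : ‖z‖ ^ 2 = z.re^2 + z.im^2 := by
    rw [Complex.sq_norm, Complex.normSq_apply]; ring
  -- key : τ * abs z ≤ abs z + z.re
  have hkey : τ * ‖z‖ ≤ ‖z‖ + z.re := by
    rcases le_or_gt 0 z.re with hre | hre
    · nlinarith [mul_nonneg (show (0:ℝ) ≤ 1 - τ by linarith) (le_of_lt habs)]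
    · have him : -z.re ≤ k * |z.im| := by linarith
      have hk0 : 0 < k := by
        rcases hk.lt_or_eq with h | h
        · exact h
        · exfalso; rw [← h] at him; simp at him; linarith
      have h2 : -z.re / k ≤ |z.im| := (div_le_iff₀' hk0).mpr (by linarith [him])
      have h5 : z.re^2 ≤ z.im^2 * k^2 := by
        have ha : 0 ≤ (-z.re)/k := le_of_lt (div_pos (by linarith) hk0)
        have hb := sq_le_sq' (by linarith [abs_nonneg z.im, ha] : -|z.im| ≤ (-z.re)/k) h2
        rw [_root_.sq_abs] at hb
        have hc : ((-z.re)/k)^2 = z.re^2/k^2 := by rw [div_pow]; congr 1; ring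
        rw [hc, div_le_iff₀ (by positivity)] at hb
        exact hb
      have h6 := Real.sq_sqrt (show (0:ℝ) ≤ 1 + k^2 by positivity)
      have h4 : ((-z.re) * Real.sqrt (1 + k^2))^2 ≤ (k * ‖z‖)^2 := by
        calc ((-z.re) * Real.sqrt (1+k^2))^2 = z.re^2 * (1+k^2) := by rw [mul_pow, h6]; ring
          _ ≤ k^2 * (z.re^2 + z.im^2) := by nlinarith [h5]
          _ = (k * ‖z‖)^2 := by rw [mul_pow, habs2]
      have h3 : (-z.re) * Real.sqrt (1 + k^2) ≤ k * ‖z‖ := by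
        have hA : 0 ≤ (-z.re) * Real.sqrt (1+k^2) := by
          apply mul_nonneg (by linarith) (le_of_lt hsq)
        have hB : 0 ≤ k * ‖z‖ := by positivity
        exact (pow_le_pow_iff_left₀ hA hB (by norm_num)).mp h4
      have h10 : -z.re ≤ (‖z‖ * k) / Real.sqrt (1+k^2) := by
        rw [le_div_iff₀ hsq]
        nlinarith [h3]
      calc τ * ‖z‖ = ‖z‖ - (‖z‖ * k) / Real.sqrt (1+k^2) := by
            rw [hτ]; ring
        _ ≤ ‖z‖ + z.re := by linarith
  -- now finish
  rw [re_cpow_neg_half_eq hz]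
  have hsre : Real.sqrt (τ/2) * Real.sqrt (‖z‖) ≤ (z ^ ((1:ℂ)/2)).re := by
    have h9 : Real.sqrt (τ/2) * Real.sqrt (‖z‖) = Real.sqrt (τ * ‖z‖ / 2) := by
      rw [← Real.sqrt_mul (by linarith : (0:ℝ) ≤ τ/2)]
      congr 1; ring
    rw [h9]
    have h10 : (z ^ ((1:ℂ)/2)).re = Real.sqrt ((‖z‖ + z.re)/2) := by
      have h11 := sq_re_cpow_half hz
      have h12 := re_cpow_half_nonneg z
      rw [← h11, Real.sqrt_sq h12]
    rw [h10]
    apply Real.sqrt_le_sqrt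
    linarith
  have hpos : 0 < Real.sqrt (‖z‖) := Real.sqrt_pos.mpr habs
  rw [div_le_div_iff₀ hpos habs]
  have habs' : ‖z‖ = Real.sqrt (‖z‖) * Real.sqrt (‖z‖) :=
    (Real.mul_self_sqrt (le_of_lt habs)).symm
  calc Real.sqrt (τ/2) * ‖z‖
      = (Real.sqrt (τ/2) * Real.sqrt (‖z‖)) * Real.sqrt (‖z‖) := by
        conv_lhs => rw [habs']
        ring
    _ ≤ (z ^ ((1:ℂ)/2)).re * Real.sqrt (‖z‖) :=
        mul_le_mul_of_nonneg_right hsre (le_of_lt hpos)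

theorem sigma_pos {k : ℝ} (hk : 0 ≤ k) :
    0 < Real.sqrt ((1 - k / Real.sqrt (1 + k^2)) / 2) := by
  apply Real.sqrt_pos.mpr
  have hsq : 0 < Real.sqrt (1 + k^2) := Real.sqrt_pos.mpr (by positivity)
  have h6 := Real.sq_sqrt (show (0:ℝ) ≤ 1 + k^2 by positivity)
  have h1 : k < Real.sqrt (1 + k^2) := by
    nlinarith [hsq, h6]
  have h2 : k / Real.sqrt (1+k^2) < 1 := (div_lt_one hsq).mpr h1
  linarith

section Barrier
variable (a : E3) (zc c : ℝ)

/-- The linear functional `x ↦ ∑ aᵢ xᵢ`. -/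
noncomputable def Lip : E3 →L[ℝ] ℝ := ∑ i : Fin 3, (a i) • (EuclideanSpace.proj (𝕜 := ℝ) i)

theorem Lip_apply (x : E3) : Lip a x = ∑ i, a i * x i := by
  simp [Lip]

theorem Lip_eq_inner (x : E3) : Lip a x = (inner ℝ a x : ℝ) := by
  rw [Lip_apply, PiLp.inner_apply]
  simp [RCLike.inner_apply]
  exact Finset.sum_congr rfl fun i _ => mul_comm _ _

/-- `β = -z_c + c i`. -/
noncomputable def beta : ℂ := ⟨-zc, c⟩

/-- The complexified squared distance `q(x) = ‖x‖² + 2β⟨a,x⟩ + β²`. -/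
noncomputable def qq (x : E3) : ℂ :=
  (sqnorm x : ℂ) + 2 * beta zc c * (Lip a x : ℂ) + (beta zc c)^2

/-- The barrier function `F = Re (q^{-1/2})`. -/
noncomputable def FF (x : E3) : ℝ := ((qq a zc c x) ^ (-((1:ℂ)/2))).re

theorem qq_re (x : E3) :
    (qq a zc c x).re = sqnorm x - 2*zc*(Lip a x) + (zc^2 - c^2) := by
  simp [qq, beta, Complex.add_re, Complex.mul_re, Complex.mul_im, pow_two]
  ring

theorem qq_im (x : E3) : (qq a zc c x).im = 2*c*(Lip a x - zc) := by
  simp [qq, beta, Complex.add_im, Complex.mul_re, Complex.mul_im, pow_two]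
  ring

theorem norm_sq_one {α : E3} (hα : ‖α‖ = 1) : ∑ i, α i * α i = 1 := by
  have h := sqnorm_eq α
  rw [hα] at h
  simpa [sqnorm] using h

theorem qq_eq_sum (ha : ‖a‖ = 1) (x : E3) :
    qq a zc c x = ∑ i : Fin 3, ((x i : ℂ) + beta zc c * (a i : ℂ))^2 := by
  have h1 : (a 0) * (a 0) + (a 1) * (a 1) + (a 2) * (a 2) = 1 := by
    have := norm_sq_one ha
    rwa [Fin.sum_univ_three] at this
  have h1c : ((a 0 : ℂ)) * (a 0) + (a 1) * (a 1) + (a 2) * (a 2) = 1 := by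
    rw [show ((a 0 : ℂ)) * (a 0) + (a 1:ℂ) * (a 1) + (a 2:ℂ) * (a 2)
      = (((a 0) * (a 0) + (a 1) * (a 1) + (a 2) * (a 2) : ℝ) : ℂ) by push_cast; ring, h1]
    norm_num
  rw [Fin.sum_univ_three]
  simp only [qq, sqnorm, Lip_apply, Fin.sum_univ_three]
  push_cast
  linear_combination (-(beta zc c)^2) * h1c

/-- derivative of `qq`. -/
noncomputable def DQ (y : E3) : E3 →L[ℝ] ℂ :=
  Complex.ofRealCLM.comp (∑ i : Fin 3, (2 * y i) • (EuclideanSpace.proj (𝕜 := ℝ) i)) +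
    (2 * beta zc c) • (Complex.ofRealCLM.comp (Lip a))

theorem hasFDerivAt_qq (y : E3) : HasFDerivAt (qq a zc c) (DQ a zc c y) y := by
  have h1 : HasFDerivAt (fun x : E3 => ((sqnorm x : ℂ)))
      (Complex.ofRealCLM.comp (∑ i : Fin 3, (2 * y i) • (EuclideanSpace.proj (𝕜 := ℝ) i))) y :=
    Complex.ofRealCLM.hasFDerivAt.comp y (hasFDerivAt_sqnorm y)
  have h2 : HasFDerivAt (fun x : E3 => 2 * beta zc c * ((Lip a x : ℝ) : ℂ))
      ((2 * beta zc c) • (Complex.ofRealCLM.comp (Lip a))) y := by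
    have h3 : HasFDerivAt (fun x : E3 => ((Lip a x : ℝ) : ℂ)) (Complex.ofRealCLM.comp (Lip a)) y :=
      Complex.ofRealCLM.hasFDerivAt.comp y (Lip a).hasFDerivAt
    exact h3.const_mul _
  have h4 := (h1.add h2).add_const ((beta zc c)^2)
  exact h4

theorem DQ_apply (y : E3) (i : Fin 3) :
    DQ a zc c y (EuclideanSpace.single i (1:ℝ)) = 2 * ((y i : ℂ) + beta zc c * (a i : ℂ)) := by
  simp only [DQ, ContinuousLinearMap.add_apply, ContinuousLinearMap.coe_comp',
    Function.comp_apply, ContinuousLinearMap.coe_sum', Finset.sum_apply,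
    ContinuousLinearMap.coe_smul', Pi.smul_apply, PiLp.proj_apply,
    ContinuousLinearMap.smul_apply, Lip_apply]
  have e1 : ∀ j : Fin 3, (EuclideanSpace.single i (1:ℝ)) j = if j = i then 1 else 0 := by
    intro j; rw [EuclideanSpace.single_apply]
  rw [Fin.sum_univ_three, Fin.sum_univ_three]
  fin_cases i <;> simp [e1] <;> push_cast <;> ring

theorem contDiff_qq : ContDiff ℝ 2 (qq a zc c) := by
  unfold qq
  refine ContDiff.add (ContDiff.add ?_ ?_) contDiff_const
  · exact Complex.ofRealCLM.contDiff.comp contDiff_sqnorm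
  · exact contDiff_const.mul (Complex.ofRealCLM.contDiff.comp (Lip a).contDiff)

theorem continuous_qq : Continuous (qq a zc c) := (contDiff_qq a zc c).continuous

end Barrier

theorem contDiffAt_FF {a : E3} {zc c : ℝ} {x : E3} (hx : qq a zc c x ∈ Complex.slitPlane) :
    ContDiffAt ℝ 2 (FF a zc c) x := by
  have h1 : AnalyticAt ℂ (fun z : ℂ => z ^ (-((1:ℂ)/2))) (qq a zc c x) :=
    (analyticAt_id).cpow analyticAt_const hx
  have h2 : ContDiffAt ℝ 2 (fun z : ℂ => z ^ (-((1:ℂ)/2))) (qq a zc c x) :=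
    (h1.contDiffAt).restrict_scalars ℝ
  have h3 : ContDiffAt ℝ 2 (fun x : E3 => (qq a zc c x) ^ (-((1:ℂ)/2))) x :=
    h2.comp x (contDiff_qq a zc c).contDiffAt
  exact (Complex.reCLM.contDiff.contDiffAt (n := 2)).comp x h3



theorem lap_FF (a : E3) (zc c : ℝ) (ha : ‖a‖ = 1) {x : E3}
    (hx : qq a zc c x ∈ Complex.slitPlane) : lap (FF a zc c) x = 0 := by
  set c0 : ℂ := -((1:ℂ)/2) with hc0
  have hz : qq a zc c x ≠ 0 := Complex.slitPlane_ne_zero hx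
  have hGS : IsOpen {y : E3 | qq a zc c y ∈ Complex.slitPlane} :=
    Complex.isOpen_slitPlane.preimage (continuous_qq a zc c)
  -- first derivative
  set D : E3 → E3 →L[ℝ] ℂ := fun y => (c0 * (qq a zc c y) ^ (c0 - 1)) • DQ a zc c y with hD
  have hDer : ∀ᶠ y in nhds x, HasFDerivAt (FF a zc c) (Complex.reCLM.comp (D y)) y := by
    filter_upwards [hGS.mem_nhds hx] with y hy
    have hc1 : HasDerivAt (fun z : ℂ => z ^ c0) (c0 * (qq a zc c y) ^ (c0 - 1)) (qq a zc c y) :=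
      (Complex.hasStrictDerivAt_cpow_const hy).hasDerivAt
    have hc2 : HasFDerivAt (fun w : E3 => (qq a zc c w) ^ c0) (D y) y :=
      hc1.comp_hasFDerivAt y (hasFDerivAt_qq a zc c y)
    exact Complex.reCLM.hasFDerivAt.comp y hc2
  -- second derivatives
  set φ' : E3 →L[ℝ] ℂ := (c0 * ((c0-1) * (qq a zc c x) ^ (c0-2))) • DQ a zc c x with hφ'
  have hφ : HasFDerivAt (fun y => c0 * (qq a zc c y) ^ (c0 - 1)) φ' x := by
    have hc1 : HasDerivAt (fun z : ℂ => z ^ (c0 - 1))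
        ((c0 - 1) * (qq a zc c x) ^ (c0 - 1 - 1)) (qq a zc c x) :=
      (Complex.hasStrictDerivAt_cpow_const hx).hasDerivAt
    have hc2 : HasFDerivAt (fun w : E3 => (qq a zc c w) ^ (c0 - 1))
        (((c0 - 1) * (qq a zc c x) ^ (c0 - 1 - 1)) • DQ a zc c x) x :=
      hc1.comp_hasFDerivAt x (hasFDerivAt_qq a zc c x)
    have hc3 := hc2.const_mul c0
    have he : c0 - 1 - 1 = c0 - 2 := by ring
    rw [he, smul_smul] at hc3
    exact hc3
  -- ψ i and its derivative
  have hψ : ∀ i : Fin 3, HasFDerivAt (fun y : E3 => 2 * ((y i : ℂ) + beta zc c * (a i : ℂ)))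
      ((2:ℂ) • (Complex.ofRealCLM.comp (EuclideanSpace.proj (𝕜 := ℝ) i))) x := by
    intro i
    have h1 : HasFDerivAt (fun y : E3 => ((y i : ℝ) : ℂ))
        (Complex.ofRealCLM.comp (EuclideanSpace.proj (𝕜 := ℝ) i)) x :=
      Complex.ofRealCLM.hasFDerivAt.comp x (EuclideanSpace.proj (𝕜 := ℝ) i).hasFDerivAt
    exact (h1.add_const (beta zc c * (a i : ℂ))).const_mul 2
  -- second derivative witnesses
  set ℓ : Fin 3 → E3 →L[ℝ] ℝ := fun i => Complex.reCLM.comp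
      ((c0 * (qq a zc c x) ^ (c0-1)) • ((2:ℂ) • (Complex.ofRealCLM.comp (EuclideanSpace.proj (𝕜 := ℝ) i)))
        + (2 * ((x i : ℂ) + beta zc c * (a i : ℂ))) • φ') with hℓdef
  have hℓ : ∀ i : Fin 3, HasFDerivAt (fun y => Complex.reCLM.comp (D y) (ee i)) (ℓ i) x := by
    intro i
    have hfun : (fun y => Complex.reCLM.comp (D y) (ee i)) =
        fun y => ((fun w => c0 * (qq a zc c w) ^ (c0-1)) y *
          (fun w : E3 => 2 * ((w i : ℂ) + beta zc c * (a i : ℂ))) y).re := by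
      funext y
      simp only [hD, ContinuousLinearMap.coe_comp', Function.comp_apply,
        ContinuousLinearMap.coe_smul', Pi.smul_apply, Complex.reCLM_apply, smul_eq_mul]
      rw [DQ_apply]
    rw [hfun]
    exact Complex.reCLM.hasFDerivAt.comp x ((hφ.mul (hψ i)))
  have hlap := lap_eq_of (fun y => Complex.reCLM.comp (D y)) ℓ hDer hℓ
  rw [hlap]
  -- evaluate the diagonal entries
  have hval : ∀ i : Fin 3, ℓ i (ee i) =
      (2 * c0 * (qq a zc c x) ^ (c0-1)
        + 4 * c0 * (c0-1) * (qq a zc c x) ^ (c0-2) * ((x i : ℂ) + beta zc c * (a i : ℂ))^2).re := by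
    intro i
    simp only [hℓdef, hφ', ContinuousLinearMap.coe_comp', Function.comp_apply,
      ContinuousLinearMap.add_apply, ContinuousLinearMap.coe_smul', Pi.smul_apply,
      Complex.reCLM_apply, smul_eq_mul, Complex.ofRealCLM_apply, PiLp.proj_apply]
    rw [DQ_apply]
    have hone : ((EuclideanSpace.single i (1:ℝ)) i : ℂ) = 1 := by
      rw [EuclideanSpace.single_apply]; simp
    rw [hone]
    congr 1
    ring
  rw [Finset.sum_congr rfl (fun i _ => hval i)]
  rw [← Complex.re_sum]
  have hsum : (∑ i : Fin 3, (2 * c0 * (qq a zc c x) ^ (c0-1)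
      + 4 * c0 * (c0-1) * (qq a zc c x) ^ (c0-2) * ((x i : ℂ) + beta zc c * (a i : ℂ))^2)) = 0 := by
    rw [Finset.sum_add_distrib, Finset.sum_const]
    rw [← Finset.mul_sum, ← qq_eq_sum a zc c ha x]
    have hpow : (qq a zc c x) ^ (c0-2) * qq a zc c x = (qq a zc c x) ^ (c0-1) := by
      have h := (Complex.cpow_add (c0-2) 1 hz).symm
      rw [Complex.cpow_one] at h
      rw [h]
      congr 1
      ring
    have : (4 * c0 * (c0-1) * (qq a zc c x) ^ (c0-2)) * qq a zc c x
        = 4 * c0 * (c0-1) * ((qq a zc c x) ^ (c0-2) * qq a zc c x) := by ring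
    rw [this, hpow]
    simp only [Finset.card_univ, Fintype.card_fin, nsmul_eq_mul, Nat.cast_ofNat]
    rw [hc0]
    ring_nf
  rw [hsum]
  simp

section Geom
variable {a : E3} {zc c R : ℝ}

theorem norm_sq_ge {x : E3} (hR : 0 < R) (hx : R ≤ ‖x‖) : R^2 ≤ sqnorm x := by
  rw [sqnorm_eq]
  exact pow_le_pow_left₀ (le_of_lt hR) hx 2

theorem qq_halfplane (hc : 0 < c) (hR2 : R^2 = zc^2 + c^2) (hR : 0 < R)
    {x : E3} (hx : R ≤ ‖x‖) :
    -((|zc|/c) * |(qq a zc c x).im|) ≤ (qq a zc c x).re := by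
  rw [qq_re, qq_im]
  set t := Lip a x with ht
  have h1 : R^2 ≤ sqnorm x := norm_sq_ge hR hx
  have h2 : |2*c*(t - zc)| = 2*c*|t - zc| := by
    rw [abs_mul, abs_of_pos (by positivity : (0:ℝ) < 2*c)]
  rw [h2]
  have h3 : (|zc|/c) * (2*c*|t-zc|) = 2 * (|zc| * |t-zc|) := by
    field_simp
  rw [h3]
  have h4 : zc * (t - zc) ≤ |zc| * |t - zc| := by
    rw [← abs_mul]
    exact le_abs_self _
  nlinarith [h1, h4, hR2]

theorem qq_slit (hc : 0 < c) (hR2 : R^2 = zc^2 + c^2) (hR : 0 < R)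
    {x : E3} (hx : R ≤ ‖x‖) (hnot : ¬(‖x‖ = R ∧ Lip a x = zc)) :
    qq a zc c x ∈ Complex.slitPlane := by
  rw [Complex.mem_slitPlane_iff]
  by_cases him : (qq a zc c x).im = 0
  · left
    rw [qq_im] at him
    have ht : Lip a x = zc := by
      have := mul_eq_zero.mp him
      rcases this with h | h
      · exfalso; rcases mul_eq_zero.mp h with h' | h' <;> [norm_num at h'; linarith]
      · linarith
    have hne : ‖x‖ ≠ R := fun h => hnot ⟨h, ht⟩
    have hgt : R < ‖x‖ := lt_of_le_of_ne hx (Ne.symm hne)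
    rw [qq_re, ht]
    have h1 : R^2 < sqnorm x := by
      rw [sqnorm_eq]
      have := pow_lt_pow_left₀ hgt (le_of_lt hR) (by norm_num : 2 ≠ 0)
      linarith
    nlinarith [h1, hR2]
  · right; exact him

theorem qq_on_circle (hc : 0 < c) (hR2 : R^2 = zc^2 + c^2)
    {x : E3} (h1 : ‖x‖ = R) (h2 : Lip a x = zc) : qq a zc c x = 0 := by
  apply Complex.ext
  · rw [qq_re, h2, sqnorm_eq, h1]
    simp
    nlinarith [hR2]
  · rw [qq_im, h2]
    simp

theorem FF_nonneg (a : E3) (zc c : ℝ) (x : E3) : 0 ≤ FF a zc c x :=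
  re_cpow_neg_half_nonneg _

theorem FF_lower (hc : 0 < c) (hR2 : R^2 = zc^2 + c^2) (hR : 0 < R)
    {x : E3} (hx : R ≤ ‖x‖) (hq0 : qq a zc c x ≠ 0) :
    Real.sqrt ((1 - (|zc|/c) / Real.sqrt (1 + (|zc|/c)^2)) / 2)
      / Real.sqrt (‖qq a zc c x‖) ≤ FF a zc c x :=
  re_cpow_neg_half_lower (by positivity) hq0 (qq_halfplane hc hR2 hR hx)

theorem FF_blowup (hc : 0 < c) (hR2 : R^2 = zc^2 + c^2) (hR : 0 < R)
    {p : E3} (hp1 : ‖p‖ = R) (hp2 : Lip a p = zc)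
    {S : Set E3} (hS : ∀ x ∈ S, R ≤ ‖x‖ ∧ qq a zc c x ≠ 0) :
    Tendsto (FF a zc c) (nhdsWithin p S) atTop := by
  set σ : ℝ := Real.sqrt ((1 - (|zc|/c) / Real.sqrt (1 + (|zc|/c)^2)) / 2) with hσ
  have hσ0 : 0 < σ := sigma_pos (by positivity)
  -- √(abs ∘ qq) tends to 0 within S, and is positive there
  have hq0 : qq a zc c p = 0 := qq_on_circle hc hR2 hp1 hp2
  have htend : Tendsto (fun x => Real.sqrt (‖qq a zc c x‖))
      (nhdsWithin p S) (nhdsWithin 0 (Set.Ioi 0)) := by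
    apply tendsto_nhdsWithin_of_tendsto_nhds_of_eventually_within
    · have hcont : Continuous (fun x => Real.sqrt (‖qq a zc c x‖)) :=
        Real.continuous_sqrt.comp (continuous_norm.comp (continuous_qq a zc c))
      have := hcont.continuousAt (x := p)
      have h0 : Real.sqrt (‖qq a zc c p‖) = 0 := by rw [hq0]; simp
      rw [ContinuousAt, h0] at this
      exact this.mono_left nhdsWithin_le_nhds
    · filter_upwards [self_mem_nhdsWithin] with x hxS
      have h2 := (hS x hxS).2
      simp only [Set.mem_Ioi]
      have h3 : 0 < ‖qq a zc c x‖ := norm_pos_iff.mpr h2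
      exact Real.sqrt_pos.mpr h3
  have hinv : Tendsto (fun x => σ / Real.sqrt (‖qq a zc c x‖))
      (nhdsWithin p S) atTop := by
    have h1 : Tendsto (fun x => (Real.sqrt (‖qq a zc c x‖))⁻¹)
        (nhdsWithin p S) atTop := tendsto_inv_nhdsGT_zero.comp htend
    have h2 := h1.const_mul_atTop hσ0
    refine h2.congr fun x => ?_
    rw [div_eq_mul_inv]
  apply tendsto_atTop_mono' _ _ hinv
  filter_upwards [self_mem_nhdsWithin] with x hxS
  exact FF_lower hc hR2 hR (hS x hxS).1 (hS x hxS).2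
end Geom

/-- One-sided comparison: the main argument. -/
theorem key_onesided
    (R : ℝ) (hR : 0 < R) (n : ℕ) (l : Fin n → Set E3)
    (hl : ∀ k : Fin n, ∃ (a : E3) (b : ℝ), a ≠ 0 ∧ |b| < R * ‖a‖ ∧
      l k = {x : E3 | ‖x‖ = R ∧ (inner ℝ a x : ℝ) = b})
    (u₁ u₂ : E3 → ℝ)
    (hharm₁ : IsHarmonicOn u₁ {x : E3 | R < ‖x‖})
    (hharm₂ : IsHarmonicOn u₂ {x : E3 | R < ‖x‖})
    (hcont₁ : ContinuousOn u₁ ({x : E3 | R ≤ ‖x‖} \ ⋃ k, l k))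
    (hcont₂ : ContinuousOn u₂ ({x : E3 | R ≤ ‖x‖} \ ⋃ k, l k))
    (hbdd₁ : ∃ c : ℝ, ∀ x : E3, R ≤ ‖x‖ → |u₁ x| ≤ c)
    (hbdd₂ : ∃ c : ℝ, ∀ x : E3, R ≤ ‖x‖ → |u₂ x| ≤ c)
    (hagree : ∀ y : E3, ‖y‖ = R → y ∉ ⋃ k, l k → u₁ y = u₂ y)
    (hdecay₁ : Filter.Tendsto u₁ (Filter.comap norm Filter.atTop) (nhds 0))
    (hdecay₂ : Filter.Tendsto u₂ (Filter.comap norm Filter.atTop) (nhds 0)) :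
    ∀ x : E3, R < ‖x‖ → u₁ x - u₂ x ≤ 0 := by
  -- extract circle data and normalize
  choose aa bb hane hblt hleq using hl
  have hna : ∀ k, 0 < ‖aa k‖ := fun k => norm_pos_iff.mpr (hane k)
  set ah : Fin n → E3 := fun k => (‖aa k‖)⁻¹ • aa k with hah
  set zc : Fin n → ℝ := fun k => bb k / ‖aa k‖ with hzc
  set cc : Fin n → ℝ := fun k => Real.sqrt (R^2 - (zc k)^2) with hcc
  have hahn : ∀ k, ‖ah k‖ = 1 := by
    intro k
    rw [hah]
    simp only [norm_smul, norm_inv, norm_norm]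
    rw [inv_mul_cancel₀ (ne_of_gt (hna k))]
  have hzcR : ∀ k, |zc k| < R := by
    intro k
    rw [hzc]
    simp only [abs_div, abs_norm]
    rw [div_lt_iff₀ (hna k)]
    exact hblt k
  have hzsq : ∀ k, (zc k)^2 < R^2 := by
    intro k
    nlinarith [hzcR k, abs_nonneg (zc k), le_abs_self (zc k), neg_abs_le (zc k)]
  have hc : ∀ k, 0 < cc k := by
    intro k
    rw [hcc]
    exact Real.sqrt_pos.mpr (by linarith [hzsq k])
  have hR2 : ∀ k, R^2 = (zc k)^2 + (cc k)^2 := by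
    intro k
    rw [hcc]
    have h2 : Real.sqrt (R^2 - (zc k)^2) ^ 2 = R^2 - (zc k)^2 :=
      Real.sq_sqrt (by linarith [hzsq k])
    simp only
    rw [h2]
    ring
  -- membership translation
  have hmem : ∀ k (x : E3), x ∈ l k ↔ (‖x‖ = R ∧ Lip (ah k) x = zc k) := by
    intro k x
    rw [hleq k]
    simp only [Set.mem_setOf_eq]
    constructor
    · rintro ⟨h1, h2⟩
      refine ⟨h1, ?_⟩
      rw [Lip_eq_inner, hah, hzc]
      simp only [real_inner_smul_left]
      rw [h2]
      exact (div_eq_inv_mul (bb k) ‖aa k‖).symm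
    · rintro ⟨h1, h2⟩
      refine ⟨h1, ?_⟩
      rw [Lip_eq_inner, hah, hzc] at h2
      simp only [real_inner_smul_left] at h2
      have hne : ‖aa k‖ ≠ 0 := ne_of_gt (hna k)
      have h3 := congrArg (fun t => ‖aa k‖ * t) h2
      rw [← mul_assoc, mul_inv_cancel₀ hne, one_mul,
        mul_comm (‖aa k‖) (bb k / ‖aa k‖), div_mul_cancel₀ _ hne] at h3
      exact h3
  -- bounds for the difference
  obtain ⟨c₁, hb1⟩ := hbdd₁
  obtain ⟨c₂, hb2⟩ := hbdd₂
  set M : ℝ := |c₁| + |c₂| + 1 with hM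
  have hM0 : 0 < M := by positivity
  have hwbd : ∀ x : E3, R ≤ ‖x‖ → u₁ x - u₂ x ≤ M - 1 := by
    intro x hx
    have h1 := hb1 x hx
    have h2 := hb2 x hx
    have e1 : u₁ x ≤ |c₁| := le_trans (le_abs_self _) (le_trans h1 (le_abs_self c₁))
    have e2 : -u₂ x ≤ |c₂| := le_trans (neg_le_abs _) (le_trans h2 (le_abs_self c₂))
    rw [hM]; linarith
  -- the barrier sum
  set Fk : Fin n → E3 → ℝ := fun k => FF (ah k) (zc k) (cc k) with hFk
  set Sb : E3 → ℝ := fun y => ∑ k, Fk k y with hSb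
  have hSb0 : ∀ y, 0 ≤ Sb y := fun y => Finset.sum_nonneg fun k _ => FF_nonneg _ _ _ _
  have hslit : ∀ (x : E3), R ≤ ‖x‖ → x ∉ (⋃ k, l k) → ∀ k,
      qq (ah k) (zc k) (cc k) x ∈ Complex.slitPlane := by
    intro x hx hxE k
    apply qq_slit (hc k) (hR2 k) hR hx
    intro hcon
    exact hxE (Set.mem_iUnion.mpr ⟨k, (hmem k x).mpr hcon⟩)
  have hslit' : ∀ (x : E3), R < ‖x‖ → ∀ k, qq (ah k) (zc k) (cc k) x ∈ Complex.slitPlane := by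
    intro x hx k
    apply qq_slit (hc k) (hR2 k) hR (le_of_lt hx)
    rintro ⟨h1, -⟩
    rw [h1] at hx; exact lt_irrefl R hx
  intro x₀ hx₀
  have main : ∀ ε : ℝ, 0 < ε → u₁ x₀ - u₂ x₀ ≤ 2 * ε := by
    intro ε hε
    -- radius from decay
    have hd1 : ∀ᶠ x : E3 in comap norm atTop, |u₁ x| < ε/2 := by
      have := Metric.tendsto_nhds.mp hdecay₁ (ε/2) (by positivity)
      simpa [Real.dist_eq] using this
    have hd2 : ∀ᶠ x : E3 in comap norm atTop, |u₂ x| < ε/2 := by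
      have := Metric.tendsto_nhds.mp hdecay₂ (ε/2) (by positivity)
      simpa [Real.dist_eq] using this
    have h12 : ∀ᶠ x : E3 in comap norm atTop, |u₁ x - u₂ x| ≤ ε := by
      filter_upwards [hd1, hd2] with x e1 e2
      calc |u₁ x - u₂ x| ≤ |u₁ x| + |u₂ x| := abs_sub _ _
        _ ≤ ε := by linarith
    rw [Filter.eventually_comap] at h12
    rw [Filter.eventually_atTop] at h12
    obtain ⟨r₀, hr₀⟩ := h12
    set r : ℝ := max (max r₀ (‖x₀‖ + 1)) (R + 1) with hr
    have hrR : R < r := lt_of_lt_of_le (by linarith) (le_max_right _ _)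
    have hrx₀ : ‖x₀‖ < r :=
      lt_of_lt_of_le (by linarith) (le_trans (le_max_right r₀ _) (le_max_left _ _))
    have hrr₀ : r₀ ≤ r := le_trans (le_max_left r₀ _) (le_max_left _ _)
    -- the small constant δ
    set δ : ℝ := min ε M / (2 * (Sb x₀ + 1)) with hδ
    have hSx₀ := hSb0 x₀
    have hδ0 : 0 < δ := by
      rw [hδ]
      exact div_pos (lt_min hε hM0) (by linarith)
    have hδS : δ * Sb x₀ ≤ min ε M / 2 := by
      rw [hδ, div_mul_eq_mul_div, div_le_div_iff₀ (by linarith) (by norm_num)]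
      nlinarith [lt_min hε hM0]
    -- the domain Ω
    set V : Set E3 := {y | R < ‖y‖ ∧ ‖y‖ < r} with hV
    have hVopen : IsOpen V := by
      rw [hV, Set.setOf_and]
      exact (isOpen_lt continuous_const continuous_norm).inter
        (isOpen_lt continuous_norm continuous_const)
    have hSbcontV : ContinuousOn (fun y => δ * Sb y) V := by
      intro y hy
      apply ContinuousAt.continuousWithinAt
      apply continuousAt_const.mul
      exact (ContDiffAt.sum (fun k _ => contDiffAt_FF (hslit' y hy.1 k))).continuousAt
    set Ω : Set E3 := V ∩ (fun y => δ * Sb y) ⁻¹' (Set.Iio M) with hΩ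
    have hΩopen : IsOpen Ω := hSbcontV.isOpen_inter_preimage hVopen isOpen_Iio
    have hΩsub : Ω ⊆ V := Set.inter_subset_left
    have hΩbdd : Bornology.IsBounded Ω := by
      apply (Metric.isBounded_ball (x := (0:E3)) (r := r)).subset
      intro y hy
      rw [Metric.mem_ball, dist_zero_right]
      exact (hΩsub hy).2
    have hclos : closure Ω ⊆ {y : E3 | R ≤ ‖y‖ ∧ ‖y‖ ≤ r} := by
      apply closure_minimal
      · intro y hy
        exact ⟨le_of_lt (hΩsub hy).1, le_of_lt (hΩsub hy).2⟩
      · rw [Set.setOf_and]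
        exact (isClosed_le continuous_const continuous_norm).inter
          (isClosed_le continuous_norm continuous_const)
    have hclosE : ∀ p ∈ closure Ω, p ∉ ⋃ k, l k := by
      intro p hp hpE
      obtain ⟨k, hk⟩ := Set.mem_iUnion.mp hpE
      rw [hmem k p] at hk
      have hne : (nhdsWithin p Ω).NeBot := mem_closure_iff_nhdsWithin_neBot.mp hp
      have hblow : Tendsto (Fk k) (nhdsWithin p Ω) atTop := by
        apply FF_blowup (hc k) (hR2 k) hR hk.1 hk.2
        intro x hxΩ
        exact ⟨le_of_lt (hΩsub hxΩ).1,
          Complex.slitPlane_ne_zero (hslit' x (hΩsub hxΩ).1 k)⟩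
      have hSblow : Tendsto (fun y => δ * Sb y) (nhdsWithin p Ω) atTop := by
        apply Tendsto.const_mul_atTop hδ0
        apply tendsto_atTop_mono' _ _ hblow
        filter_upwards [self_mem_nhdsWithin] with y hyΩ
        exact Finset.single_le_sum (fun j _ => FF_nonneg _ _ _ y) (Finset.mem_univ k)
      have hev1 : ∀ᶠ y in nhdsWithin p Ω, M < δ * Sb y := hSblow.eventually_gt_atTop M
      have hev2 : ∀ᶠ y in nhdsWithin p Ω, δ * Sb y < M := by
        filter_upwards [self_mem_nhdsWithin] with y hyΩ
        exact hyΩ.2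
      obtain ⟨y, hy1, hy2⟩ := (hev1.and hev2).exists
      linarith
    have hclos2 : closure Ω ⊆ {x : E3 | R ≤ ‖x‖} \ ⋃ k, l k :=
      fun p hp => ⟨(hclos hp).1, hclosE p hp⟩
    -- the comparison function g
    set g : E3 → ℝ := fun y => (u₁ y - u₂ y) - δ * Sb y with hg
    have hgcont : ContinuousOn g (closure Ω) := by
      apply ContinuousOn.sub
      · exact (hcont₁.sub hcont₂).mono hclos2
      · intro p hp
        apply ContinuousAt.continuousWithinAt
        apply continuousAt_const.mul
        exact (ContDiffAt.sum
          (fun k _ => contDiffAt_FF (hslit p (hclos hp).1 (hclosE p hp) k))).continuousAt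
    have hopenext : IsOpen {x : E3 | R < ‖x‖} := isOpen_lt continuous_const continuous_norm
    have hgC2 : ∀ y ∈ Ω, ContDiffAt ℝ 2 g y := by
      intro y hy
      have hy1 : R < ‖y‖ := (hΩsub hy).1
      have hu1 : ContDiffAt ℝ 2 u₁ y := hharm₁.1.contDiffAt (hopenext.mem_nhds hy1)
      have hu2 : ContDiffAt ℝ 2 u₂ y := hharm₂.1.contDiffAt (hopenext.mem_nhds hy1)
      have hS2 : ContDiffAt ℝ 2 Sb y :=
        ContDiffAt.sum (fun k _ => contDiffAt_FF (hslit' y hy1 k))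
      exact (hu1.sub hu2).sub (contDiffAt_const.mul hS2)
    have hglap : ∀ y ∈ Ω, lap g y = 0 := by
      intro y hy
      have hy1 : R < ‖y‖ := (hΩsub hy).1
      have hu1 : ContDiffAt ℝ 2 u₁ y := hharm₁.1.contDiffAt (hopenext.mem_nhds hy1)
      have hu2 : ContDiffAt ℝ 2 u₂ y := hharm₂.1.contDiffAt (hopenext.mem_nhds hy1)
      have hS2 : ContDiffAt ℝ 2 Sb y :=
        ContDiffAt.sum (fun k _ => contDiffAt_FF (hslit' y hy1 k))
      have e0 : lap g y = lap (fun z => u₁ z - u₂ z) y - lap (fun z => δ * Sb z) y :=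
        lap_sub (hu1.sub hu2) (contDiffAt_const.mul hS2)
      have e1 : lap (fun z => u₁ z - u₂ z) y = lap u₁ y - lap u₂ y := lap_sub hu1 hu2
      have e2 : lap (fun z => δ * Sb z) y = δ * lap Sb y := lap_const_mul δ hS2
      have e3 : lap Sb y = ∑ k, lap (Fk k) y :=
        lap_sum Fk (fun k => contDiffAt_FF (hslit' y hy1 k))
      have e4 : ∀ k : Fin n, lap (Fk k) y = 0 := fun k =>
        lap_FF (ah k) (zc k) (cc k) (hahn k) (hslit' y hy1 k)
      rw [e0, e1, e2, e3]
      rw [Finset.sum_congr rfl (fun k _ => e4 k)]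
      rw [hharm₁.2 y hy1, hharm₂.2 y hy1]
      simp
    have hfront : ∀ y ∈ frontier Ω, g y ≤ ε := by
      intro y hyf
      rw [hΩopen.frontier_eq] at hyf
      obtain ⟨hyc, hyn⟩ := hyf
      have hy1 : R ≤ ‖y‖ := (hclos hyc).1
      have hy2 : ‖y‖ ≤ r := (hclos hyc).2
      have hyE : y ∉ ⋃ k, l k := hclosE y hyc
      have hSby : 0 ≤ Sb y := hSb0 y
      have hδSy : 0 ≤ δ * Sb y := mul_nonneg (le_of_lt hδ0) hSby
      rcases eq_or_lt_of_le hy1 with heq | hlt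
      · have hag := hagree y heq.symm hyE
        rw [hg]
        simp only
        linarith
      · rcases eq_or_lt_of_le hy2 with heq2 | hlt2
        · have hd := hr₀ ‖y‖ (by rw [heq2]; exact hrr₀) y rfl
          have := abs_le.mp hd
          rw [hg]; simp only
          linarith [this.2]
        · have hyV : y ∈ V := ⟨hlt, hlt2⟩
          have hMy : M ≤ δ * Sb y := by
            by_contra hcon
            push_neg at hcon
            exact hyn ⟨hyV, hcon⟩
          have hw := hwbd y hy1
          rw [hg]; simp only
          linarith
    have hx₀Ω : x₀ ∈ Ω := by
      refine ⟨⟨hx₀, hrx₀⟩, ?_⟩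
      simp only [Set.mem_preimage, Set.mem_Iio]
      have h1 : min ε M / 2 < M := by
        have := min_le_right ε M
        linarith
      linarith [hδS]
    have hfin := max_principle hΩopen hΩbdd hgcont hgC2 hglap hfront x₀ (subset_closure hx₀Ω)
    rw [hg] at hfin
    simp only at hfin
    have hδx : δ * Sb x₀ ≤ ε := by
      have := min_le_left ε M
      linarith [hδS]
    linarith
  by_contra hcon
  push_neg at hcon
  have := main ((u₁ x₀ - u₂ x₀)/4) (by linarith)
  linarith



/-- uniqueness for the external Dirichlet generalized harmonic problem:
Let `E = ⋃ k, l k ⊆ S_R` be a finite union of circles, each `l k` being the nonempty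
non-degenerate intersection of the sphere `S_R` with an affine plane.  If `u₁`, `u₂`
are harmonic on `{‖x‖ > R}`, continuous on `{‖x‖ ≥ R} \ E`, bounded on `{‖x‖ ≥ R}`,
agree on `S_R \ E`, and both tend to `0` at infinity, then `u₁ = u₂` on `{‖x‖ > R}`. -/
theorem exterior_generalized_dirichlet_unique
    (R : ℝ) (hR : 0 < R) (n : ℕ) (l : Fin n → Set E3)
    (hl : ∀ k : Fin n, ∃ (a : E3) (b : ℝ), a ≠ 0 ∧ |b| < R * ‖a‖ ∧
      l k = {x : E3 | ‖x‖ = R ∧ (inner ℝ a x : ℝ) = b})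
    (u₁ u₂ : E3 → ℝ)
    (hharm₁ : IsHarmonicOn u₁ {x : E3 | R < ‖x‖})
    (hharm₂ : IsHarmonicOn u₂ {x : E3 | R < ‖x‖})
    (hcont₁ : ContinuousOn u₁ ({x : E3 | R ≤ ‖x‖} \ ⋃ k, l k))
    (hcont₂ : ContinuousOn u₂ ({x : E3 | R ≤ ‖x‖} \ ⋃ k, l k))
    (hbdd₁ : ∃ c : ℝ, ∀ x : E3, R ≤ ‖x‖ → |u₁ x| ≤ c)
    (hbdd₂ : ∃ c : ℝ, ∀ x : E3, R ≤ ‖x‖ → |u₂ x| ≤ c)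
    (hagree : ∀ y : E3, ‖y‖ = R → y ∉ ⋃ k, l k → u₁ y = u₂ y)
    (hdecay₁ : Filter.Tendsto u₁ (Filter.comap norm Filter.atTop) (nhds 0))
    (hdecay₂ : Filter.Tendsto u₂ (Filter.comap norm Filter.atTop) (nhds 0)) :
    ∀ x : E3, R < ‖x‖ → u₁ x = u₂ x := by
  intro x hx
  have h1 := key_onesided R hR n l hl u₁ u₂ hharm₁ hharm₂ hcont₁ hcont₂ hbdd₁ hbdd₂
    hagree hdecay₁ hdecay₂ x hx
  have h2 := key_onesided R hR n l hl u₂ u₁ hharm₂ hharm₁ hcont₂ hcont₁ hbdd₂ hbdd₁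
    (fun y hy hyE => (hagree y hy hyE).symm) hdecay₂ hdecay₁ x hx
  linarith
end

section
/- Let R > 0, c > 0, and let v : ℝ³ → ℝ be harmonic on the open ball {ξ ∈ ℝ³ : ‖ξ‖ < R} with |v(ξ)| ≤ c for all ‖ξ‖ < R. Define u(x) = (R/‖x‖)·v((R²/‖x‖²)·x) for ‖x‖ > R. Then: (i) u is harmonic on {x : ‖x‖ > R}; (ii) |u(x)| ≤ c·R/‖x‖ ≤ c for every x with ‖x‖ > R, so u is bounded and u(x) → 0 as ‖x‖ → ∞; (iii) for every boundary point y with ‖y‖ = R at which v extends continuously (from inside the ball) with value g(y), the function u(x) tends to g(y) as x → y with ‖x‖ > R. Hence u solves the external Dirichlet generalized harmonic problem whenever v solves the corresponding internal problem. -/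
open scoped RealInnerProductSpace

namespace KelvinAux

lemma e3_inner_single (x : E3) (i : Fin 3) : ⟪x, EuclideanSpace.single i (1:ℝ)⟫ = x i := by
  simp [EuclideanSpace.inner_single_right]

lemma e3_single_inner_self (i : Fin 3) :
    ⟪EuclideanSpace.single i (1:ℝ), EuclideanSpace.single i (1:ℝ)⟫ = (1:ℝ) := by
  rw [real_inner_self_eq_norm_sq, EuclideanSpace.norm_single]
  norm_num

lemma sum_single_smul (x : E3) : ∑ i, x i • EuclideanSpace.single i (1:ℝ) = x := by
  ext j
  have : (∑ i, x i • EuclideanSpace.single i (1:ℝ)) j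
      = ∑ i, (x i • EuclideanSpace.single i (1:ℝ)) j := by
    rw [WithLp.ofLp_sum]; exact Finset.sum_apply _ _ _
  rw [this]
  simp [EuclideanSpace.single_apply]

lemma sum_sq_eq (x : E3) : ∑ i, x i * x i = ‖x‖^2 := by
  rw [← real_inner_self_eq_norm_sq, PiLp.inner_apply]
  simp [RCLike.inner_apply, mul_comm]
  simp only [sq]

lemma sum_apply_single (L : E3 →L[ℝ] ℝ) (x : E3) :
    ∑ i, x i * L (EuclideanSpace.single i (1:ℝ)) = L x := by
  conv_rhs => rw [← sum_single_smul x]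
  rw [map_sum]
  simp [smul_eq_mul]

lemma sum_apply_single₂ (W : E3 →L[ℝ] E3 →L[ℝ] ℝ) (x z : E3) :
    ∑ i, x i * W (EuclideanSpace.single i (1:ℝ)) z = W x z := by
  have hx : W x = ∑ i, x i • W (EuclideanSpace.single i (1:ℝ)) := by
    conv_lhs => rw [← sum_single_smul x]
    rw [map_sum]
    simp
  rw [hx, ContinuousLinearMap.sum_apply]
  simp [smul_eq_mul]

lemma hasFDerivAt_norm' {x : E3} (hx : x ≠ 0) :
    HasFDerivAt (fun y : E3 => ‖y‖) ((‖x‖⁻¹) • innerSL ℝ x) x := by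
  have h1 : HasFDerivAt (fun y : E3 => ⟪y, y⟫) ((2:ℝ) • innerSL ℝ x) x := by
    have := (hasFDerivAt_id x).inner ℝ (hasFDerivAt_id x)
    refine this.congr_fderiv ?_
    ext h
    simp [two_mul, mul_comm]
    exact real_inner_comm x h
  have hxn : ‖x‖ ≠ 0 := norm_ne_zero_iff.mpr hx
  have hne : (⟪x, x⟫ : ℝ) ≠ 0 := by
    rw [real_inner_self_eq_norm_sq]; exact pow_ne_zero 2 hxn
  have hs : HasDerivAt Real.sqrt (1 / (2 * Real.sqrt (⟪x, x⟫ : ℝ))) (⟪x, x⟫ : ℝ) :=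
    Real.hasDerivAt_sqrt hne
  have h2 : HasFDerivAt (fun y : E3 => Real.sqrt ⟪y, y⟫)
      ((1 / (2 * Real.sqrt (⟪x, x⟫ : ℝ))) • ((2:ℝ) • innerSL ℝ x)) x :=
    HasDerivAt.comp_hasFDerivAt (f := fun y : E3 => ⟪y, y⟫) x hs h1
  have hfun : (fun y : E3 => Real.sqrt ⟪y, y⟫) = fun y : E3 => ‖y‖ := by
    funext y
    rw [real_inner_self_eq_norm_sq, Real.sqrt_sq (norm_nonneg y)]
  rw [hfun] at h2
  convert h2 using 1
  rw [real_inner_self_eq_norm_sq, Real.sqrt_sq (norm_nonneg x), smul_smul]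
  congr 1
  field_simp

lemma hasFDerivAt_inv_pow_norm {x : E3} (hx : x ≠ 0) (k : ℕ) :
    HasFDerivAt (fun y : E3 => (‖y‖ ^ (k+1))⁻¹)
      ((-((k:ℝ)+1) * (‖x‖ ^ (k+3))⁻¹) • innerSL ℝ x) x := by
  have hxn : ‖x‖ ≠ 0 := norm_ne_zero_iff.mpr hx
  have hs : HasDerivAt (fun t : ℝ => (t ^ (k+1))⁻¹)
      (-((k : ℝ)+1) * (‖x‖ ^ (k + 2))⁻¹) ‖x‖ := by
    have := (hasDerivAt_pow (k+1) ‖x‖).inv (pow_ne_zero (k+1) hxn)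
    refine this.congr_deriv ?_
    push_cast
    field_simp
    ring
  have h1 : HasFDerivAt (fun y : E3 => (‖y‖ ^ (k+1))⁻¹)
      ((-((k : ℝ)+1) * (‖x‖ ^ (k + 2))⁻¹) • ((‖x‖⁻¹) • innerSL ℝ x)) x :=
    HasDerivAt.comp_hasFDerivAt (f := fun y : E3 => ‖y‖) x hs (hasFDerivAt_norm' hx)
  convert h1 using 1
  rw [smul_smul]
  congr 1
  rw [pow_succ]
  field_simp

lemma hasFDerivAt_K {R : ℝ} {x : E3} (hx : x ≠ 0) :
    HasFDerivAt (fun y : E3 => (R ^ 2 / ‖y‖ ^ 2) • y)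
      ((R ^ 2 * (‖x‖ ^ 2)⁻¹) • ContinuousLinearMap.id ℝ E3
        + ((-2 * R ^ 2 * (‖x‖ ^ 4)⁻¹) • innerSL ℝ x).smulRight x) x := by
  have hc : HasFDerivAt (fun y : E3 => R ^ 2 * (‖y‖ ^ 2)⁻¹)
      ((-2 * R ^ 2 * (‖x‖ ^ 4)⁻¹) • innerSL ℝ x) x := by
    have := (hasFDerivAt_inv_pow_norm hx 1).const_mul (R ^ 2)
    refine this.congr_fderiv ?_
    rw [smul_smul]
    norm_num
    congr 1
    ring
  have h := hc.smul (hasFDerivAt_id x)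
  have hfun : (fun y : E3 => (R ^ 2 / ‖y‖ ^ 2) • y)
      = fun y : E3 => (R ^ 2 * (‖y‖ ^ 2)⁻¹) • (id y) := by
    funext y; rw [div_eq_mul_inv]; rfl
  rw [hfun]
  exact h

lemma norm_K {R : ℝ} (hR : 0 < R) {x : E3} (hx : R < ‖x‖) :
    ‖(R ^ 2 / ‖x‖ ^ 2) • x‖ < R := by
  have hr : (0:ℝ) < ‖x‖ := lt_trans hR hx
  rw [norm_smul, Real.norm_eq_abs, abs_of_pos (by positivity)]
  rw [div_mul_eq_mul_div, div_lt_iff₀ (by positivity)]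
  nlinarith [mul_lt_mul_of_pos_left hx (mul_pos hR hr)]

lemma norm_K_eq {R : ℝ} (hR : 0 < R) {x : E3} (hx : 0 < ‖x‖) :
    ‖(R ^ 2 / ‖x‖ ^ 2) • x‖ = R ^ 2 / ‖x‖ := by
  rw [norm_smul, Real.norm_eq_abs, abs_of_pos (by positivity)]
  field_simp

lemma fderiv_formula {R : ℝ} (hR : 0 < R) {v : E3 → ℝ}
    (hv : ContDiffOn ℝ 2 v {ξ : E3 | ‖ξ‖ < R})
    {u : E3 → ℝ}
    (hu : ∀ x : E3, R < ‖x‖ → u x = (R / ‖x‖) * v ((R ^ 2 / ‖x‖ ^ 2) • x))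
    {x : E3} (hx : R < ‖x‖) (e : E3) :
    fderiv ℝ u x e =
      (-R) * ((‖x‖ ^ 3)⁻¹ * (⟪x, e⟫ * v ((R ^ 2 / ‖x‖ ^ 2) • x)))
      + R ^ 3 * ((‖x‖ ^ 3)⁻¹ * (fderiv ℝ v ((R ^ 2 / ‖x‖ ^ 2) • x)) e)
      + (-2 * R ^ 3) * ((‖x‖ ^ 5)⁻¹ *
          (⟪x, e⟫ * (fderiv ℝ v ((R ^ 2 / ‖x‖ ^ 2) • x)) x)) := by
  have hr : (0:ℝ) < ‖x‖ := lt_trans hR hx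
  have hxn : ‖x‖ ≠ 0 := ne_of_gt hr
  have hx0 : x ≠ 0 := norm_ne_zero_iff.mp hxn
  have hξB : ((R ^ 2 / ‖x‖ ^ 2) • x) ∈ {ξ : E3 | ‖ξ‖ < R} := norm_K hR hx
  have hBopen : IsOpen {ξ : E3 | ‖ξ‖ < R} := isOpen_lt continuous_norm continuous_const
  have hvd : DifferentiableAt ℝ v ((R ^ 2 / ‖x‖ ^ 2) • x) :=
    (hv.contDiffAt (hBopen.mem_nhds hξB)).differentiableAt (by norm_num)
  have hKd := hasFDerivAt_K (R := R) hx0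
  have hcomp := HasFDerivAt.comp (g := v) (f := fun y : E3 => (R ^ 2 / ‖y‖ ^ 2) • y)
      x hvd.hasFDerivAt hKd
  have hsc := (hasFDerivAt_inv_pow_norm hx0 0).const_mul R
  have hg := hsc.mul hcomp
  have hopen : IsOpen {y : E3 | R < ‖y‖} := isOpen_lt continuous_const continuous_norm
  have hue : u =ᶠ[nhds x]
      fun y : E3 => (R * (‖y‖ ^ (0+1))⁻¹) * v ((R ^ 2 / ‖y‖ ^ 2) • y) := by
    filter_upwards [hopen.mem_nhds hx] with y hy
    rw [hu y hy]
    simp [div_eq_mul_inv]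
  have hg' : HasFDerivAt
      (fun y : E3 => (R * (‖y‖ ^ (0+1))⁻¹) * v ((R ^ 2 / ‖y‖ ^ 2) • y)) _ x := hg
  rw [hue.fderiv_eq, hg'.fderiv]
  simp only [ContinuousLinearMap.add_apply, ContinuousLinearMap.smul_apply,
    ContinuousLinearMap.coe_comp', Function.comp_apply, ContinuousLinearMap.coe_id',
    id_eq, ContinuousLinearMap.smulRight_apply, innerSL_apply_apply, smul_eq_mul,
    map_add, map_smul, ContinuousLinearMap.map_smul]
  field_simp
  ring

set_option maxHeartbeats 2000000 in
lemma lap_eq_zero {R : ℝ} (hR : 0 < R) {v : E3 → ℝ}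
    (hv : ContDiffOn ℝ 2 v {ξ : E3 | ‖ξ‖ < R})
    (hlap : ∀ ξ ∈ {ξ : E3 | ‖ξ‖ < R}, lap v ξ = 0)
    {u : E3 → ℝ}
    (hu : ∀ x : E3, R < ‖x‖ → u x = (R / ‖x‖) * v ((R ^ 2 / ‖x‖ ^ 2) • x))
    {x : E3} (hx : R < ‖x‖) : lap u x = 0 := by
  have hr : (0:ℝ) < ‖x‖ := lt_trans hR hx
  have hxn : ‖x‖ ≠ 0 := ne_of_gt hr
  have hx0 : x ≠ 0 := norm_ne_zero_iff.mp hxn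
  have hξB : ((R ^ 2 / ‖x‖ ^ 2) • x) ∈ {ξ : E3 | ‖ξ‖ < R} := norm_K hR hx
  have hBopen : IsOpen {ξ : E3 | ‖ξ‖ < R} := isOpen_lt continuous_norm continuous_const
  have hopen : IsOpen {y : E3 | R < ‖y‖} := isOpen_lt continuous_const continuous_norm
  set ξ : E3 := (R ^ 2 / ‖x‖ ^ 2) • x with hξdef
  set Dv : E3 →L[ℝ] ℝ := fderiv ℝ v ξ with hDvdef
  set W : E3 →L[ℝ] (E3 →L[ℝ] ℝ) := fderiv ℝ (fderiv ℝ v) ξ with hWdef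
  have hvd : DifferentiableAt ℝ v ξ :=
    (hv.contDiffAt (hBopen.mem_nhds hξB)).differentiableAt (by norm_num)
  have hv1 : ContDiffOn ℝ 1 (fderiv ℝ v) {ξ : E3 | ‖ξ‖ < R} :=
    hv.fderiv_of_isOpen hBopen (by norm_num)
  have hWd : HasFDerivAt (fderiv ℝ v) W ξ :=
    ((hv1.contDiffAt (hBopen.mem_nhds hξB)).differentiableAt (by norm_num)).hasFDerivAt
  have hKd := hasFDerivAt_K (R := R) hx0
  have hcomp' : HasFDerivAt (fun y : E3 => v ((R ^ 2 / ‖y‖ ^ 2) • y))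
      (Dv.comp ((R ^ 2 * (‖x‖ ^ 2)⁻¹) • ContinuousLinearMap.id ℝ E3
        + ((-2 * R ^ 2 * (‖x‖ ^ 4)⁻¹) • innerSL ℝ x).smulRight x)) x :=
    HasFDerivAt.comp (g := v) (f := fun y : E3 => (R ^ 2 / ‖y‖ ^ 2) • y)
      x hvd.hasFDerivAt hKd
  have hW'' : HasFDerivAt (fun y : E3 => fderiv ℝ v ((R ^ 2 / ‖y‖ ^ 2) • y))
      (W.comp ((R ^ 2 * (‖x‖ ^ 2)⁻¹) • ContinuousLinearMap.id ℝ E3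
        + ((-2 * R ^ 2 * (‖x‖ ^ 4)⁻¹) • innerSL ℝ x).smulRight x)) x :=
    HasFDerivAt.comp (g := fderiv ℝ v) (f := fun y : E3 => (R ^ 2 / ‖y‖ ^ 2) • y)
      x hWd hKd
  have ha3 : HasFDerivAt (fun y : E3 => (‖y‖ ^ 3)⁻¹)
      ((-3 * (‖x‖ ^ 5)⁻¹) • innerSL ℝ x) x := by
    have := hasFDerivAt_inv_pow_norm hx0 2
    norm_num at this
    rw [neg_mul, neg_smul]
    exact this
  have ha5 : HasFDerivAt (fun y : E3 => (‖y‖ ^ 5)⁻¹)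
      ((-5 * (‖x‖ ^ 7)⁻¹) • innerSL ℝ x) x := by
    have := hasFDerivAt_inv_pow_norm hx0 4
    norm_num at this
    rw [neg_mul, neg_smul]
    exact this
  have key : ∀ i : Fin 3,
      fderiv ℝ (fun y => fderiv ℝ u y (EuclideanSpace.single i 1)) x
        (EuclideanSpace.single i 1) =
      (3*R*(‖x‖^5)⁻¹*(v ξ) + 12*R^3*(‖x‖^7)⁻¹*(Dv x) + 4*R^5*(‖x‖^9)⁻¹*(W x x))
          * (x i * x i)
        + (-R*(‖x‖^3)⁻¹*(v ξ) - 2*R^3*(‖x‖^5)⁻¹*(Dv x))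
        + (-6*R^3*(‖x‖^5)⁻¹) * (x i * Dv (EuclideanSpace.single i 1))
        + (R^5*(‖x‖^5)⁻¹) * (W (EuclideanSpace.single i 1) (EuclideanSpace.single i 1))
        + (-2*R^5*(‖x‖^7)⁻¹) * (x i * W x (EuclideanSpace.single i 1))
        + (-2*R^5*(‖x‖^7)⁻¹) * (x i * W (EuclideanSpace.single i 1) x) := by
    intro i
    set e : E3 := EuclideanSpace.single i 1 with hedef
    have hb : HasFDerivAt (fun y : E3 => ⟪y, e⟫) (innerSL ℝ e) x := by
      have h := (innerSL ℝ e).hasFDerivAt (x := x)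
      have hfe : (fun y : E3 => ⟪y, e⟫) = fun y : E3 => innerSL ℝ e y := by
        funext y; rw [innerSL_apply_apply]; exact real_inner_comm e y
      rw [hfe]; exact h
    have hd := hW''.clm_apply (hasFDerivAt_const e x)
    have he2 := hW''.clm_apply (hasFDerivAt_id x)
    have heq : (fun y => fderiv ℝ u y e) =ᶠ[nhds x]
        (fun y : E3 => (-R) * ((‖y‖ ^ 3)⁻¹ * (⟪y, e⟫ * v ((R ^ 2 / ‖y‖ ^ 2) • y)))
          + R ^ 3 * ((‖y‖ ^ 3)⁻¹ * (fderiv ℝ v ((R ^ 2 / ‖y‖ ^ 2) • y)) e)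
          + (-2 * R ^ 3) * ((‖y‖ ^ 5)⁻¹ *
              (⟪y, e⟫ * (fderiv ℝ v ((R ^ 2 / ‖y‖ ^ 2) • y)) y))) := by
      filter_upwards [hopen.mem_nhds hx] with y hy
      exact fderiv_formula hR hv hu hy e
    have hP : HasFDerivAt
        (fun y : E3 => (-R) * ((‖y‖ ^ 3)⁻¹ * (⟪y, e⟫ * v ((R ^ 2 / ‖y‖ ^ 2) • y)))
          + R ^ 3 * ((‖y‖ ^ 3)⁻¹ * (fderiv ℝ v ((R ^ 2 / ‖y‖ ^ 2) • y)) e)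
          + (-2 * R ^ 3) * ((‖y‖ ^ 5)⁻¹ *
              (⟪y, e⟫ * (fderiv ℝ v ((R ^ 2 / ‖y‖ ^ 2) • y)) y))) _ x :=
      (((ha3.mul (hb.mul hcomp')).const_mul (-R)).add
        ((ha3.mul hd).const_mul (R ^ 3))).add
        ((ha5.mul (hb.mul he2)).const_mul (-2 * R ^ 3))
    rw [heq.fderiv_eq, hP.fderiv]
    simp only [ContinuousLinearMap.add_apply, ContinuousLinearMap.smul_apply,
      ContinuousLinearMap.coe_comp', Function.comp_apply, ContinuousLinearMap.coe_id',
      id_eq, ContinuousLinearMap.smulRight_apply, innerSL_apply_apply, smul_eq_mul,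
      map_add, map_smul, ContinuousLinearMap.map_smul, ContinuousLinearMap.comp_zero,
      ContinuousLinearMap.zero_apply, ContinuousLinearMap.flip_apply, zero_add, add_zero,
      e3_inner_single, e3_single_inner_self, hedef, Pi.mul_apply, ← hξdef, ← hDvdef,
      EuclideanSpace.single_apply, if_true]
    field_simp
    ring
  unfold lap
  rw [Finset.sum_congr rfl (fun i _ => key i)]
  have hs3 : ∑ i : Fin 3, W (EuclideanSpace.single i 1) (EuclideanSpace.single i 1) = 0 := by
    have hlapv := hlap ξ hξB
    unfold lap at hlapv
    rw [← hlapv]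
    apply Finset.sum_congr rfl
    intro i _
    have h2 : HasFDerivAt (fun y : E3 => fderiv ℝ v y (EuclideanSpace.single i 1))
        ((fderiv ℝ v ξ).comp (0 : E3 →L[ℝ] E3)
          + W.flip (EuclideanSpace.single i 1)) ξ :=
      hWd.clm_apply (hasFDerivAt_const _ ξ)
    rw [h2.fderiv]
    simp
  have hs1 := sum_sq_eq x
  have hs2 := sum_apply_single Dv x
  have hs4 : ∑ i, x i * W x (EuclideanSpace.single i 1) = W x x := sum_apply_single (W x) x
  have hs5 := sum_apply_single₂ W x x
  rw [show (‖x‖:ℝ)^2 = ‖x‖^2 from rfl] at hs1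
  simp only [Finset.sum_add_distrib, ← Finset.mul_sum, Finset.sum_const,
    Finset.card_univ, Fintype.card_fin, nsmul_eq_mul, hs1, hs2, hs3, hs4, hs5, mul_zero]
  field_simp
  ring

end KelvinAux

open KelvinAux in
/-- If `v` is harmonic on the ball `{‖ξ‖ < R}` with `|v| ≤ c` there,
then `u(x) = (R/‖x‖)·v((R²/‖x‖²)·x)` is (i) harmonic on `{‖x‖ > R}`;
(ii) satisfies `|u(x)| ≤ c·R/‖x‖ ≤ c`, so it is bounded and tends to `0` at infinity;
(iii) at every boundary point `y` with `‖y‖ = R` where `v` extends continuously from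
inside with value `g`, the function `u` tends to `g` from the exterior.  Hence `u`
solves the external Dirichlet generalized harmonic problem whenever `v` solves the
corresponding internal one. -/
theorem kelvin_transform_solves_exterior_problem
    (R c : ℝ) (hR : 0 < R) (hc : 0 < c) (v : E3 → ℝ)
    (hharm : IsHarmonicOn v {ξ : E3 | ‖ξ‖ < R})
    (hbdd : ∀ ξ : E3, ‖ξ‖ < R → |v ξ| ≤ c)
    (u : E3 → ℝ)
    (hu : ∀ x : E3, R < ‖x‖ → u x = (R / ‖x‖) * v ((R ^ 2 / ‖x‖ ^ 2) • x)) :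
    IsHarmonicOn u {x : E3 | R < ‖x‖} ∧
    (∀ x : E3, R < ‖x‖ → |u x| ≤ c * R / ‖x‖ ∧ c * R / ‖x‖ ≤ c) ∧
    Filter.Tendsto u (Filter.comap norm Filter.atTop) (nhds 0) ∧
    (∀ (y : E3) (g : ℝ), ‖y‖ = R →
      Filter.Tendsto v (nhdsWithin y {ξ : E3 | ‖ξ‖ < R}) (nhds g) →
      Filter.Tendsto u (nhdsWithin y {x : E3 | R < ‖x‖}) (nhds g)) := by
  have hBopen : IsOpen {ξ : E3 | ‖ξ‖ < R} := isOpen_lt continuous_norm continuous_const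
  have hopen : IsOpen {y : E3 | R < ‖y‖} := isOpen_lt continuous_const continuous_norm
  have hv2 := hharm.1
  have hRn : R ≠ 0 := ne_of_gt hR
  -- the pointwise bound
  have hbound : ∀ x : E3, R < ‖x‖ → |u x| ≤ c * R / ‖x‖ := by
    intro x hx
    have hr : (0:ℝ) < ‖x‖ := lt_trans hR hx
    rw [hu x hx, abs_mul]
    have hKB : ‖(R ^ 2 / ‖x‖ ^ 2) • x‖ < R := norm_K hR hx
    have hv := hbdd _ hKB
    have hRnn : (0:ℝ) ≤ R / ‖x‖ := by positivity
    rw [abs_of_nonneg hRnn]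
    calc R / ‖x‖ * |v ((R ^ 2 / ‖x‖ ^ 2) • x)| ≤ R / ‖x‖ * c :=
          mul_le_mul_of_nonneg_left hv hRnn
      _ = c * R / ‖x‖ := by ring
  -- smoothness
  have hsmooth : ContDiffOn ℝ 2 u {x : E3 | R < ‖x‖} := by
    intro x hx
    have hx' : R < ‖x‖ := hx
    have hr : (0:ℝ) < ‖x‖ := lt_trans hR hx'
    have hxn : ‖x‖ ≠ 0 := ne_of_gt hr
    have hx0 : x ≠ 0 := norm_ne_zero_iff.mp hxn
    have hKc : ContDiffAt ℝ 2 (fun y : E3 => (R ^ 2 / ‖y‖ ^ 2) • y) x := by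
      have hn : ContDiffAt ℝ 2 (fun y : E3 => R ^ 2 / ‖y‖ ^ 2) x := by
        apply ContDiffAt.div contDiffAt_const
        · exact (contDiffAt_norm ℝ hx0).pow 2
        · exact pow_ne_zero 2 hxn
      exact hn.smul contDiffAt_id
    have hvK : ContDiffAt ℝ 2 (fun y : E3 => v ((R ^ 2 / ‖y‖ ^ 2) • y)) x :=
      ContDiffAt.comp (g := v) (f := fun y : E3 => (R ^ 2 / ‖y‖ ^ 2) • y)
        x (hv2.contDiffAt (hBopen.mem_nhds (norm_K hR hx'))) hKc
    have hdivc : ContDiffAt ℝ 2 (fun y : E3 => R / ‖y‖) x :=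
      ContDiffAt.div contDiffAt_const (contDiffAt_norm ℝ hx0) hxn
    have hg : ContDiffAt ℝ 2
        (fun y : E3 => (R / ‖y‖) * v ((R ^ 2 / ‖y‖ ^ 2) • y)) x := hdivc.mul hvK
    have hue : u =ᶠ[nhds x] fun y : E3 => (R / ‖y‖) * v ((R ^ 2 / ‖y‖ ^ 2) • y) := by
      filter_upwards [hopen.mem_nhds hx'] with y hy
      exact hu y hy
    exact (hg.congr_of_eventuallyEq hue).contDiffWithinAt
  refine ⟨⟨hsmooth, fun x hx => lap_eq_zero hR hv2 hharm.2 hu hx⟩, ?_, ?_, ?_⟩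
  · -- (ii)
    intro x hx
    have hr : (0:ℝ) < ‖x‖ := lt_trans hR hx
    refine ⟨hbound x hx, ?_⟩
    rw [div_le_iff₀ hr]
    nlinarith
  · -- (iii)
    have htn : Filter.Tendsto (fun x : E3 => ‖x‖)
        (Filter.comap norm Filter.atTop) Filter.atTop := Filter.tendsto_comap
    have hb0 : Filter.Tendsto (fun x : E3 => c * R / ‖x‖)
        (Filter.comap norm Filter.atTop) (nhds 0) := by
      have h1 := htn.inv_tendsto_atTop
      have h2 := h1.const_mul (c * R)
      rw [mul_zero] at h2
      simpa [div_eq_mul_inv] using h2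
    apply squeeze_zero_norm' _ hb0
    filter_upwards [htn.eventually (Filter.eventually_gt_atTop R)] with x hx
    rw [Real.norm_eq_abs]
    exact hbound x hx
  · -- (iv)
    intro y g hyR hvg
    have hyn : ‖y‖ ≠ 0 := by rw [hyR]; exact hRn
    have hy0 : y ≠ 0 := norm_ne_zero_iff.mp hyn
    have h1 : Filter.Tendsto (fun x : E3 => R / ‖x‖)
        (nhdsWithin y {x : E3 | R < ‖x‖}) (nhds 1) := by
      have hn : Filter.Tendsto (fun x : E3 => ‖x‖)
          (nhdsWithin y {x : E3 | R < ‖x‖}) (nhds R) := by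
        have := (continuous_norm.tendsto y).mono_left
          (nhdsWithin_le_nhds (s := {x : E3 | R < ‖x‖}))
        rwa [hyR] at this
      have := Filter.Tendsto.div (tendsto_const_nhds (x := R)) hn hRn
      rw [div_self hRn] at this
      exact this
    have hKcont : Filter.Tendsto (fun x : E3 => (R ^ 2 / ‖x‖ ^ 2) • x)
        (nhdsWithin y {x : E3 | R < ‖x‖}) (nhds y) := by
      have hcA : ContinuousAt (fun x : E3 => (R ^ 2 / ‖x‖ ^ 2) • x) y := by
        have hf : ContinuousAt (fun x : E3 => R ^ 2 / ‖x‖ ^ 2) y :=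
          ContinuousAt.div continuousAt_const
          ((continuous_norm.continuousAt).pow 2)
          (by rw [hyR]; exact pow_ne_zero 2 hRn)
        exact hf.smul continuousAt_id
      have h := hcA.tendsto.mono_left
        (nhdsWithin_le_nhds (s := {x : E3 | R < ‖x‖}))
      have hKy : (R ^ 2 / ‖y‖ ^ 2) • y = y := by
        rw [hyR, div_self (pow_ne_zero 2 hRn), one_smul]
      rwa [hKy] at h
    have h2 : Filter.Tendsto (fun x : E3 => (R ^ 2 / ‖x‖ ^ 2) • x)
        (nhdsWithin y {x : E3 | R < ‖x‖}) (nhdsWithin y {ξ : E3 | ‖ξ‖ < R}) := by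
      rw [tendsto_nhdsWithin_iff]
      refine ⟨hKcont, ?_⟩
      filter_upwards [self_mem_nhdsWithin] with x hx
      exact norm_K hR hx
    have h3 := hvg.comp h2
    have h4 := h1.mul h3
    rw [one_mul] at h4
    refine Filter.Tendsto.congr' ?_ h4
    filter_upwards [self_mem_nhdsWithin] with x hx
    exact (hu x hx).symm
end
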